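/- Let f : X → X be a homeomorphism of a topological space X and let r be a nonzero integer. Then f is orbit expansive if and only if f^r is orbit expansive. -/

import Mathlib

open Set

/-- The `n`-th iterate (`n : ℤ`) of a homeomorphism `f`, as a function. -/
def Homeomorph.zpow {X : Type*} [TopologicalSpace X] (f : X ≃ₜ X) (n : ℤ) : X → X :=
  ⇑(f.toEquiv ^ n)

/-- `U = {U 0, …, U (l-1)}` is an o-expansive covering for the homeomorphism `f`:
it is a finite open cover such that any two points whose whole orbits stay
`U`-close must coincide. -/
def IsOExpansiveCover {X : Type*} [TopologicalSpace X] {l : ℕ} (f : X ≃ₜ X)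
    (U : Fin l → Set X) : Prop :=
  (∀ i, IsOpen (U i)) ∧ (⋃ i, U i) = Set.univ ∧
    ∀ x y : X, (∀ n : ℤ, ∃ i, f.zpow n x ∈ U i ∧ f.zpow n y ∈ U i) → x = y

/-- A homeomorphism is orbit expansive if it admits an o-expansive covering. -/
def OrbitExpansive {X : Type*} [TopologicalSpace X] (f : X ≃ₜ X) : Prop :=
  ∃ (l : ℕ) (U : Fin l → Set X), IsOExpansiveCover f U

/-- `U` is an r-expansivity covering for `f`: a finite open cover such that for every
open cover `V` and every sequence `k : ℤ → Fin n` there is `N` with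
`⋂_{|j| ≤ N} f^j(U (k j))` contained in a member of `V`. -/
def IsRExpansiveCover {X : Type*} [TopologicalSpace X] {n : ℕ} (f : X ≃ₜ X)
    (U : Fin n → Set X) : Prop :=
  (∀ i, IsOpen (U i)) ∧ (⋃ i, U i) = Set.univ ∧
    ∀ V : Set (Set X), (∀ v ∈ V, IsOpen v) → ⋃₀ V = Set.univ →
      ∀ k : ℤ → Fin n, ∃ N : ℕ, ∃ v ∈ V,
        (⋂ j ∈ Set.Icc (-(N : ℤ)) (N : ℤ), f.zpow j '' U (k j)) ⊆ v

/-- A homeomorphism is refinement expansive if it admits an r-expansivity covering. -/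
def RefinementExpansive {X : Type*} [TopologicalSpace X] (f : X ≃ₜ X) : Prop :=
  ∃ (n : ℕ) (U : Fin n → Set X), IsRExpansiveCover f U

/-- `U` is a uniform r-expansivity covering for `f`: `N` can be chosen uniformly in the
sequence `k`. -/
def IsUniformRExpansiveCover {X : Type*} [TopologicalSpace X] {n : ℕ} (f : X ≃ₜ X)
    (U : Fin n → Set X) : Prop :=
  (∀ i, IsOpen (U i)) ∧ (⋃ i, U i) = Set.univ ∧
    ∀ V : Set (Set X), (∀ v ∈ V, IsOpen v) → ⋃₀ V = Set.univ →
      ∃ N : ℕ, ∀ k : ℤ → Fin n, ∃ v ∈ V,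
        (⋂ j ∈ Set.Icc (-(N : ℤ)) (N : ℤ), f.zpow j '' U (k j)) ⊆ v

/-- A homeomorphism is uniformly refinement expansive if it admits a uniform
r-expansivity covering. -/
def UniformlyRefinementExpansive {X : Type*} [TopologicalSpace X] (f : X ≃ₜ X) : Prop :=
  ∃ (n : ℕ) (U : Fin n → Set X), IsUniformRExpansiveCover f U


lemma hzpow_comp {X : Type*} [TopologicalSpace X] (f : X ≃ₜ X) (a b : ℤ) (x : X) :
    f.zpow a (f.zpow b x) = f.zpow (a + b) x := by
  simp [Homeomorph.zpow, ← Equiv.Perm.mul_apply, ← zpow_add]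

lemma hzpow_continuous {X : Type*} [TopologicalSpace X] (f : X ≃ₜ X) (n : ℤ) :
    Continuous (f.zpow n) := by
  induction n using Int.induction_on with
  | zero => simpa [Homeomorph.zpow] using continuous_id
  | succ n ih =>
      have h : f.zpow ((n : ℤ) + 1) = ⇑f ∘ f.zpow n := by
        funext x
        rw [show ((n : ℤ) + 1) = 1 + n by ring, ← hzpow_comp]
        simp [Homeomorph.zpow]
      rw [h]; exact f.continuous.comp ih
  | pred n ih =>
      have h : f.zpow (-(n : ℤ) - 1) = ⇑f.symm ∘ f.zpow (-n) := by
        funext x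
        rw [show (-(n : ℤ) - 1) = -1 + -n by ring, ← hzpow_comp]
        simp [Homeomorph.zpow]
      rw [h]; exact f.symm.continuous.comp ih

lemma hzpow_mul {X : Type*} [TopologicalSpace X] (f g : X ≃ₜ X) (r : ℤ)
    (hg : ⇑g = f.zpow r) (n : ℤ) : g.zpow n = f.zpow (r * n) := by
  have h : g.toEquiv = f.toEquiv ^ r := Equiv.coe_fn_injective hg
  unfold Homeomorph.zpow
  rw [h, ← zpow_mul]

/-- Proposition 2.14: for a nonzero integer `r`, a homeomorphism `f` is orbit
expansive iff its `r`-th power (here: any homeomorphism `g` whose underlying map is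
`f^r`) is orbit expansive. -/
theorem orbitExpansive_iff_zpow {X : Type*} [TopologicalSpace X]
    (f g : X ≃ₜ X) (r : ℤ) (hr : r ≠ 0) (hg : ⇑g = f.zpow r) :
    OrbitExpansive f ↔ OrbitExpansive g := by
  constructor
  · rintro ⟨l, U, hopen, hcov, hsep⟩
    set s : ℕ := r.natAbs with hs
    have hs0 : 0 < s := Int.natAbs_pos.mpr hr
    refine ⟨l ^ s, fun i => ⋂ j : Fin s,
      (f.zpow (j : ℤ)) ⁻¹' U (finFunctionFinEquiv.symm i j), ?_, ?_, ?_⟩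
    · intro i
      exact isOpen_iInter_of_finite fun j => (hopen _).preimage (hzpow_continuous f _)
    · ext x
      simp only [mem_iUnion, mem_iInter, mem_preimage, mem_univ, iff_true]
      have hc : ∀ j : Fin s, ∃ i, f.zpow (j : ℤ) x ∈ U i := by
        intro j
        have : f.zpow (j : ℤ) x ∈ ⋃ i, U i := hcov.symm ▸ mem_univ _
        exact mem_iUnion.mp this
      choose c hc using hc
      exact ⟨finFunctionFinEquiv c, fun j => by simpa using hc j⟩
    · intro x y h
      apply hsep
      intro m
      set q : ℤ := m / (s : ℤ) with hq
      set j : ℤ := m % (s : ℤ) with hj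
      have hspos : (0 : ℤ) < (s : ℤ) := by exact_mod_cast hs0
      have hj0 : 0 ≤ j := Int.emod_nonneg m (by positivity)
      have hjs : j < (s : ℤ) := Int.emod_lt_of_pos m hspos
      have hm : (s : ℤ) * q + j = m := Int.mul_ediv_add_emod m s
      set n : ℤ := r.sign * q with hn
      have hrn : r * n = (s : ℤ) * q := by
        rw [hn, ← mul_assoc, Int.mul_sign_self, hs]
      obtain ⟨i, hx, hy⟩ := h n
      have hjlt : j.toNat < s := by omega
      set jf : Fin s := ⟨j.toNat, hjlt⟩ with hjf
      have hjcast : ((jf : ℕ) : ℤ) = j := by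
        simp [hjf, Int.toNat_of_nonneg hj0]
      refine ⟨finFunctionFinEquiv.symm i jf, ?_, ?_⟩
      · have := mem_iInter.mp hx jf
        rw [mem_preimage, hzpow_mul f g r hg, hzpow_comp, hjcast, hrn] at this
        rwa [show j + (s : ℤ) * q = m by omega] at this
      · have := mem_iInter.mp hy jf
        rw [mem_preimage, hzpow_mul f g r hg, hzpow_comp, hjcast, hrn] at this
        rwa [show j + (s : ℤ) * q = m by omega] at this
  · rintro ⟨l, U, hopen, hcov, hsep⟩
    refine ⟨l, U, hopen, hcov, ?_⟩
    intro x y h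
    apply hsep
    intro n
    obtain ⟨i, hx, hy⟩ := h (r * n)
    rw [← hzpow_mul f g r hg] at hx hy
    exact ⟨i, hx, hy⟩
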